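/- Generative Lemma: Let 𝒫 be a family of nonempty finite subsets of 𝕍 and W ⊆ 𝕍 a nonempty finite set. Then W is generative from 𝒫 if and only if: (a) if |W| = 1 then W ∈ 𝒫 or some W' ∈ 𝒫 is an evidence of ⟨W,W⟩; and (b) if |W| ≥ 2 then for every nonempty proper subset Z ⊊ W there exists W' ∈ 𝒫 which is an evidence of ⟨Z, W∖Z⟩. -/

import Mathlib

/-- `W` is an evidence of `⟨X, Y⟩`. -/
def Evidence {α : Type*} (W X Y : Set α) : Prop :=
  (W ∩ X).Nonempty ∧ (W ∩ Y).Nonempty ∧ W ⊆ X ∪ Y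

/-- `W` is generative from the family `P`. -/
def Generative {α : Type*} (P : Set (Set α)) (W : Set α) : Prop :=
  W.Nonempty ∧ W.Finite ∧
    ∀ X Y : Set α, X.Finite → Y.Finite → Evidence W X Y →
      ∃ W' ∈ P, Evidence W' X Y

/-- Generative Lemma. -/
theorem generative_lemma {α : Type*} (P : Set (Set α))
    (hP : ∀ W ∈ P, W.Nonempty ∧ W.Finite)
    (W : Set α) (hW : W.Nonempty) (hWfin : W.Finite) :
    Generative P W ↔
      ((W.ncard = 1 → (W ∈ P ∨ ∃ W' ∈ P, Evidence W' W W)) ∧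
        (2 ≤ W.ncard → ∀ Z : Set α, Z.Nonempty → Z ⊂ W →
          ∃ W' ∈ P, Evidence W' Z (W \ Z))) := by
  constructor
  · rintro ⟨-, -, hgen⟩
    constructor
    · intro _
      right
      exact hgen W W hWfin hWfin ⟨by simpa using hW, by simpa using hW, by simp⟩
    · intro _ Z hZne hZW
      have hsub : Z ⊆ W := hZW.subset
      refine hgen Z (W \ Z) (hWfin.subset hsub) (hWfin.diff) ?_
      refine ⟨?_, ?_, ?_⟩
      · obtain ⟨z, hz⟩ := hZne
        exact ⟨z, hsub hz, hz⟩
      · obtain ⟨w, hwW, hwZ⟩ := Set.exists_of_ssubset hZW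
        exact ⟨w, hwW, hwW, hwZ⟩
      · intro x hx
        by_cases hxZ : x ∈ Z
        · exact Or.inl hxZ
        · exact Or.inr ⟨hx, hxZ⟩
  · rintro ⟨h1, h2⟩
    refine ⟨hW, hWfin, ?_⟩
    rintro X Y hX hY hEv
    obtain ⟨⟨a, haW, haX⟩, ⟨b, hbW, hbY⟩, hsubXY⟩ := hEv
    have hpos : 1 ≤ W.ncard := (Set.ncard_pos hWfin).mpr hW
    rcases eq_or_lt_of_le hpos with hone | htwo
    · -- ncard = 1
      obtain ⟨c, hc⟩ := Set.ncard_eq_one.mp hone.symm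
      have hac : a = c := by rw [hc] at haW; exact haW
      have hbc : b = c := by rw [hc] at hbW; exact hbW
      rcases h1 hone.symm with hWP | ⟨W', hW'P, hW'W, _, hW'sub⟩
      · exact ⟨W, hWP, ⟨a, haW, haX⟩, ⟨b, hbW, hbY⟩, hsubXY⟩
      · -- W' ⊆ W = {c}, W' nonempty
        obtain ⟨w, hwW', hwW⟩ := hW'W
        have hwc : w = c := by rw [hc] at hwW; exact hwW
        refine ⟨W', hW'P, ⟨w, hwW', ?_⟩, ⟨w, hwW', ?_⟩, ?_⟩
        · rw [hwc, ← hac]; exact haX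
        · rw [hwc, ← hbc]; exact hbY
        · intro x hx
          have : x ∈ W := by
            rcases hW'sub hx with h | h
            · exact h
            · exact h
          exact hsubXY this
    · -- 2 ≤ ncard
      by_cases hWX : W ⊆ X
      · -- use Z = W \ {b}
        obtain ⟨d, hdW, hdb⟩ := Set.exists_ne_of_one_lt_ncard htwo b
        have hZne : (W \ {b}).Nonempty := ⟨d, hdW, hdb⟩
        have hZW : W \ {b} ⊂ W := Set.sdiff_singleton_ssubset.mpr hbW
        obtain ⟨W', hW'P, ⟨u, huW', huZ⟩, ⟨v, hvW', hvD⟩, hW'sub⟩ := h2 htwo _ hZne hZW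
        have hW'W : W' ⊆ W := by
          intro x hx
          rcases hW'sub hx with h | h
          · exact h.1
          · exact h.1
        refine ⟨W', hW'P, ⟨u, huW', hWX (hW'W huW')⟩, ⟨v, hvW', ?_⟩, fun x hx => hsubXY (hW'W hx)⟩
        have : v = b := by
          have := hvD.2
          simp [Set.mem_diff] at this
          exact this (hvD.1)
        rw [this]; exact hbY
      · -- use Z = W ∩ X
        have hZne : (W ∩ X).Nonempty := ⟨a, haW, haX⟩
        have hZW : W ∩ X ⊂ W := by
          refine ⟨Set.inter_subset_left, fun h => hWX fun x hx => (h hx).2⟩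
        obtain ⟨W', hW'P, ⟨u, huW', huZ⟩, ⟨v, hvW', hvD⟩, hW'sub⟩ := h2 htwo _ hZne hZW
        have hW'W : W' ⊆ W := by
          intro x hx
          rcases hW'sub hx with h | h
          · exact h.1
          · exact h.1
        refine ⟨W', hW'P, ⟨u, huW', huZ.2⟩, ⟨v, hvW', ?_⟩, fun x hx => hsubXY (hW'W hx)⟩
        have hvW : v ∈ W := hvD.1
        have hvX : v ∉ X := fun hvX => hvD.2 ⟨hvW, hvX⟩
        rcases hsubXY hvW with h | h
        · exact absurd h hvX
        · exact h
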